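/- Let n ≥ 2, let i_1,…,i_m be distinct indices in {1,…,n} with 2 < m ≤ n, and let U be a neighborhood of Δⁿ ⊂ ℝⁿ. There is no C¹ function h: U → ℝ satisfying D_{i_{k+1}}(x_{i_{k+1}}/x_{i_k} + h(x)) = D_{i_k}(x_{i_{k+2}}/x_{i_{k+1}} + h(x)) for k = 1,…,m−2, D_{i_m}(x_{i_m}/x_{i_{m−1}} + h(x)) = D_{i_{m−1}}(x_{i_1}/x_{i_m} + h(x)), and D_{i_1}(x_{i_1}/x_{i_m} + h(x)) = D_{i_m}(x_{i_2}/x_{i_1} + h(x)) for all x ∈ U. -/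

import Mathlib

/-- Let `2 < m ≤ n`, let `I 1, …, I m` be distinct indices in `Fin n`,
and let `U` be an open neighborhood of the unit simplex `Δⁿ ⊂ ℝⁿ`. There is no `C¹`
function `h : U → ℝ` satisfying
`D_{i_{k+1}}(x_{i_{k+1}}/x_{i_k} + h) = D_{i_k}(x_{i_{k+2}}/x_{i_{k+1}} + h)` for
`k = 1, …, m-2`, together with
`D_{i_m}(x_{i_m}/x_{i_{m-1}} + h) = D_{i_{m-1}}(x_{i_1}/x_{i_m} + h)` and
`D_{i_1}(x_{i_1}/x_{i_m} + h) = D_{i_m}(x_{i_2}/x_{i_1} + h)` on `U`.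
(Here `D_a f x = fderiv ℝ f x (Pi.single a 1)`.) -/
theorem no_exact_h_for_long_cycle (n m : ℕ) (hn : 2 ≤ n) (hm : 2 < m) (hmn : m ≤ n)
    (I : ℕ → Fin n) (hinj : Set.InjOn I (Set.Icc 1 m))
    (U : Set (Fin n → ℝ)) (hUopen : IsOpen U) (hU : stdSimplex ℝ (Fin n) ⊆ U) :
    ¬ ∃ h : (Fin n → ℝ) → ℝ, ContDiffOn ℝ 1 h U ∧
      (∀ x ∈ U, ∀ k : ℕ, 1 ≤ k → k ≤ m - 2 →
        fderiv ℝ (fun y : Fin n → ℝ => y (I (k + 1)) / y (I k) + h y) x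
            (Pi.single (I (k + 1)) 1)
          = fderiv ℝ (fun y : Fin n → ℝ => y (I (k + 2)) / y (I (k + 1)) + h y) x
              (Pi.single (I k) 1)) ∧
      (∀ x ∈ U,
        fderiv ℝ (fun y : Fin n → ℝ => y (I m) / y (I (m - 1)) + h y) x
            (Pi.single (I m) 1)
          = fderiv ℝ (fun y : Fin n → ℝ => y (I 1) / y (I m) + h y) x
              (Pi.single (I (m - 1)) 1)) ∧
      (∀ x ∈ U,
        fderiv ℝ (fun y : Fin n → ℝ => y (I 1) / y (I m) + h y) x
            (Pi.single (I 1) 1)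
          = fderiv ℝ (fun y : Fin n → ℝ => y (I 2) / y (I 1) + h y) x
              (Pi.single (I m) 1)) := by
  rintro ⟨h, hC1, hEqk, hEqA, hEqB⟩
  have hn0 : (0 : ℝ) < n := by
    have : (0:ℕ) < n := by omega
    exact_mod_cast this
  set x₀ : Fin n → ℝ := fun _ => (n : ℝ)⁻¹ with hx₀def
  have hx₀pos : ∀ i : Fin n, (0:ℝ) < x₀ i := fun i => by
    simp only [hx₀def]; positivity
  have hx₀mem : x₀ ∈ stdSimplex ℝ (Fin n) := by
    refine ⟨fun i => (hx₀pos i).le, ?_⟩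
    simp only [hx₀def]
    rw [Finset.sum_const, Finset.card_univ, Fintype.card_fin, nsmul_eq_mul]
    field_simp
  have hx₀U : x₀ ∈ U := hU hx₀mem
  have hdiff : DifferentiableAt ℝ h x₀ :=
    (hC1.differentiableOn one_ne_zero).differentiableAt (hUopen.mem_nhds hx₀U)
  have key : ∀ a b c : Fin n,
      fderiv ℝ (fun y : Fin n → ℝ => y a / y b + h y) x₀ (Pi.single c 1)
        = ((if c = a then (n:ℝ) else 0) - (if c = b then (n:ℝ) else 0))
          + fderiv ℝ h x₀ (Pi.single c 1) := by
    intro a b c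
    have hb : x₀ b ≠ 0 := (hx₀pos b).ne'
    have pa : HasFDerivAt (fun y : Fin n → ℝ => y a)
        (ContinuousLinearMap.proj a : (Fin n → ℝ) →L[ℝ] ℝ) x₀ :=
      hasFDerivAt_apply a x₀
    have pb : HasFDerivAt (fun y : Fin n → ℝ => y b)
        (ContinuousLinearMap.proj b : (Fin n → ℝ) →L[ℝ] ℝ) x₀ :=
      hasFDerivAt_apply b x₀
    have hinv : HasFDerivAt (fun y : Fin n → ℝ => (y b)⁻¹)
        ((-(x₀ b ^ 2)⁻¹) • (ContinuousLinearMap.proj b : (Fin n → ℝ) →L[ℝ] ℝ)) x₀ :=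
      (hasDerivAt_inv hb).comp_hasFDerivAt x₀ pb
    have hmul : HasFDerivAt (fun y : Fin n → ℝ => y a * (y b)⁻¹)
        (x₀ a • ((-(x₀ b ^ 2)⁻¹) • (ContinuousLinearMap.proj b : (Fin n → ℝ) →L[ℝ] ℝ))
          + (x₀ b)⁻¹ • (ContinuousLinearMap.proj a : (Fin n → ℝ) →L[ℝ] ℝ)) x₀ := by
      exact pa.mul hinv
    have hf : fderiv ℝ (fun y : Fin n → ℝ => y a / y b + h y) x₀
        = (x₀ a • ((-(x₀ b ^ 2)⁻¹) • (ContinuousLinearMap.proj b : (Fin n → ℝ) →L[ℝ] ℝ))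
            + (x₀ b)⁻¹ • (ContinuousLinearMap.proj a : (Fin n → ℝ) →L[ℝ] ℝ))
          + fderiv ℝ h x₀ := by
      have hfe : (fun y : Fin n → ℝ => y a / y b + h y)
          = fun y : Fin n → ℝ => y a * (y b)⁻¹ + h y := by
        funext y; rw [div_eq_mul_inv]
      rw [hfe]
      exact (hmul.add hdiff.hasFDerivAt).fderiv
    rw [hf]
    simp only [ContinuousLinearMap.add_apply, ContinuousLinearMap.smul_apply,
      ContinuousLinearMap.proj_apply, smul_eq_mul, Pi.single_apply, hx₀def]
    have hne : (n:ℝ) ≠ 0 := hn0.ne'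
    by_cases hca : c = a <;> by_cases hcb : c = b <;>
      simp [hca, hcb, eq_comm] <;> split_ifs <;> (try field_simp) <;> (try ring) <;> simp_all
  have Ine : ∀ i j : ℕ, i ∈ Set.Icc 1 m → j ∈ Set.Icc 1 m → i ≠ j → I i ≠ I j :=
    fun i j hi hj hij e => hij (hinj hi hj e)
  have step : ∀ k, 1 ≤ k → k ≤ m - 2 →
      fderiv ℝ h x₀ (Pi.single (I (k+1)) 1)
        = fderiv ℝ h x₀ (Pi.single (I k) 1) - n := by
    intro k h1 h2
    have e := hEqk x₀ hx₀U k h1 h2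
    rw [key (I (k+1)) (I k) (I (k+1)), key (I (k+2)) (I (k+1)) (I k)] at e
    have n1 : I (k+1) ≠ I k := Ine _ _ ⟨by omega, by omega⟩ ⟨by omega, by omega⟩ (by omega)
    have n2 : I k ≠ I (k+2) := Ine _ _ ⟨by omega, by omega⟩ ⟨by omega, by omega⟩ (by omega)
    have n3 : I k ≠ I (k+1) := n1.symm
    rw [if_pos rfl, if_neg n1, if_neg n2, if_neg n3] at e
    linarith
  have main : ∀ j, j ≤ m - 2 →
      fderiv ℝ h x₀ (Pi.single (I (1+j)) 1)
        = fderiv ℝ h x₀ (Pi.single (I 1) 1) - (j : ℝ) * n := by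
    intro j
    induction j with
    | zero => intro _; simp
    | succ j ih =>
      intro hj
      have h1 := ih (by omega)
      have h2 := step (1+j) (by omega) (by omega)
      rw [show 1 + j + 1 = 1 + (j+1) from by ring] at h2
      rw [h2, h1]; push_cast; ring
  have hm1 : fderiv ℝ h x₀ (Pi.single (I (m-1)) 1)
      = fderiv ℝ h x₀ (Pi.single (I 1) 1) - ((m:ℝ) - 2) * n := by
    have := main (m-2) le_rfl
    rw [show 1 + (m-2) = m - 1 from by omega] at this
    rw [this, Nat.cast_sub (by omega : 2 ≤ m)]
    norm_num
  have eA := hEqA x₀ hx₀U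
  rw [key (I m) (I (m-1)) (I m), key (I 1) (I m) (I (m-1))] at eA
  have nA1 : I m ≠ I (m-1) := Ine _ _ ⟨by omega, by omega⟩ ⟨by omega, by omega⟩ (by omega)
  have nA2 : I (m-1) ≠ I 1 := Ine _ _ ⟨by omega, by omega⟩ ⟨by omega, by omega⟩ (by omega)
  have nA3 : I (m-1) ≠ I m := nA1.symm
  rw [if_pos rfl, if_neg nA1, if_neg nA2, if_neg nA3] at eA
  have eB := hEqB x₀ hx₀U
  rw [key (I 1) (I m) (I 1), key (I 2) (I 1) (I m)] at eB
  have nB1 : I 1 ≠ I m := Ine _ _ ⟨by omega, by omega⟩ ⟨by omega, by omega⟩ (by omega)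
  have nB2 : I m ≠ I 2 := Ine _ _ ⟨by omega, by omega⟩ ⟨by omega, by omega⟩ (by omega)
  have nB3 : I m ≠ I 1 := nB1.symm
  rw [if_pos rfl, if_neg nB1, if_neg nB2, if_neg nB3] at eB
  have hm0 : (2:ℝ) < m := by exact_mod_cast hm
  nlinarith [eA, eB, hm1, hn0, hm0]
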